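/- (Convex conditional mean implies Corollary 2, Section 3.2) Let X and Z be real-valued integrable random variables on a probability space with X > 0 almost surely, E[X] > 0, X·Z integrable, and suppose there exists a convex function f : [0,∞) → ℝ with f(0) ≤ 0 such that the conditional expectation of X·Z given the σ-algebra generated by X equals f ∘ X almost surely. Then E[Z] ≤ E[X·Z]/E[X]. In the classifier setting this says: if the conditional mean volume of bad global minima ω̄_ε(ω) is a convex function of the total volume ω of global minima vanishing at 0, then ⟨φ_ε(S)⟩_S ≤ ⟨ω_ε(S)⟩_S/⟨ω(S)⟩_S. -/
import Mathlib


open MeasureTheory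

/-- Chebyshev-type correlation inequality: if `(U a - U b)*(V a - V b) ≥ 0`
a.e. on the product, then `E[U]·E[V] ≤ E[U·V]`. -/
lemma corr_aux {α : Type*} [MeasurableSpace α] (μ : Measure α) [IsProbabilityMeasure μ]
    (U V : α → ℝ) (hU : Integrable U μ) (hV : Integrable V μ)
    (hUV : Integrable (fun a => U a * V a) μ)
    (hmono : ∀ᵐ z ∂(μ.prod μ), 0 ≤ (U z.1 - U z.2) * (V z.1 - V z.2)) :
    (∫ a, U a ∂μ) * (∫ a, V a ∂μ) ≤ ∫ a, U a * V a ∂μ := by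
  have h1 : Integrable (fun z : α × α => U z.1 * V z.1) (μ.prod μ) := by
    have := hUV.mul_prod (integrable_const (1 : ℝ)) (ν := μ)
    simpa using this
  have h2 : Integrable (fun z : α × α => U z.2 * V z.2) (μ.prod μ) := by
    have := (integrable_const (1 : ℝ) (μ := μ)).mul_prod hUV
    simpa using this
  have h3 : Integrable (fun z : α × α => U z.1 * V z.2) (μ.prod μ) := hU.mul_prod hV
  have h4 : Integrable (fun z : α × α => V z.1 * U z.2) (μ.prod μ) := hV.mul_prod hU
  have h12 : Integrable (fun z : α × α => U z.1 * V z.1 + U z.2 * V z.2) (μ.prod μ) :=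
    h1.add h2
  have h34 : Integrable (fun z : α × α => U z.1 * V z.2 + V z.1 * U z.2) (μ.prod μ) :=
    h3.add h4
  have key : 0 ≤ ∫ z, (U z.1 - U z.2) * (V z.1 - V z.2) ∂(μ.prod μ) :=
    integral_nonneg_of_ae hmono
  have expand : (fun z : α × α => (U z.1 - U z.2) * (V z.1 - V z.2))
      = fun z => (U z.1 * V z.1 + U z.2 * V z.2) - (U z.1 * V z.2 + V z.1 * U z.2) := by
    funext z; ring
  rw [expand, integral_sub h12 h34, integral_add h1 h2, integral_add h3 h4] at key
  have e1 : ∫ z : α × α, U z.1 * V z.1 ∂(μ.prod μ) = ∫ a, U a * V a ∂μ := by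
    have := integral_prod_mul (μ := μ) (ν := μ) (fun a => U a * V a) (fun _ => (1 : ℝ))
    simpa using this
  have e2 : ∫ z : α × α, U z.2 * V z.2 ∂(μ.prod μ) = ∫ a, U a * V a ∂μ := by
    have := integral_prod_mul (μ := μ) (ν := μ) (fun _ => (1 : ℝ)) (fun a => U a * V a)
    simpa using this
  have e3 : ∫ z : α × α, U z.1 * V z.2 ∂(μ.prod μ) = (∫ a, U a ∂μ) * ∫ a, V a ∂μ :=
    integral_prod_mul U V
  have e4 : ∫ z : α × α, V z.1 * U z.2 ∂(μ.prod μ) = (∫ a, V a ∂μ) * ∫ a, U a ∂μ :=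
    integral_prod_mul V U
  rw [e1, e2, e3, e4] at key
  nlinarith [key]

/-- Convex conditional mean implies Corollary 2 (Section 3.2): if
`E[X·Z | σ(X)] = f ∘ X` a.s. for a convex `f : [0,∞) → ℝ` with `f(0) ≤ 0`,
`X > 0` a.s. and `E[X] > 0`, then `E[Z] ≤ E[X·Z]/E[X]`. -/
theorem convex_condexp_implies_corollary2
    {α : Type*} [MeasurableSpace α] (μ : Measure α) [IsProbabilityMeasure μ]
    (X Z : α → ℝ) (hX : Measurable X)
    (hXint : Integrable X μ) (hZint : Integrable Z μ)
    (hXZint : Integrable (fun a => X a * Z a) μ)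
    (hXpos : ∀ᵐ a ∂μ, 0 < X a) (hEX : 0 < ∫ a, X a ∂μ)
    (f : ℝ → ℝ) (hfconv : ConvexOn ℝ (Set.Ici 0) f) (hf0 : f 0 ≤ 0)
    (hcond : μ[fun a => X a * Z a | MeasurableSpace.comap X inferInstance]
      =ᵐ[μ] f ∘ X) :
    ∫ a, Z a ∂μ ≤ (∫ a, X a * Z a ∂μ) / (∫ a, X a ∂μ) := by
  have hm : MeasurableSpace.comap X inferInstance ≤ ‹MeasurableSpace α› := hX.comap_le
  have hXm : Measurable[MeasurableSpace.comap X inferInstance] X :=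
    measurable_iff_comap_le.mpr le_rfl
  have hinvm : StronglyMeasurable[MeasurableSpace.comap X inferInstance]
      (fun a => (X a)⁻¹) := (Measurable.inv hXm).stronglyMeasurable
  -- Z = (1/X) · (X·Z) a.e.
  have hZeq : Z =ᵐ[μ] fun a => (X a)⁻¹ * (X a * Z a) := by
    filter_upwards [hXpos] with a ha
    rw [inv_mul_cancel_left₀ ha.ne']
  have hmul : ((fun a => (X a)⁻¹) * fun a => X a * Z a) = fun a => (X a)⁻¹ * (X a * Z a) := rfl
  -- conditional expectation of Z
  have hcondZ : μ[Z | MeasurableSpace.comap X inferInstance]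
      =ᵐ[μ] fun a => (X a)⁻¹ * f (X a) := by
    calc μ[Z | MeasurableSpace.comap X inferInstance]
        =ᵐ[μ] μ[(fun a => (X a)⁻¹) * fun a => X a * Z a |
            MeasurableSpace.comap X inferInstance] := by
          refine condExp_congr_ae ?_
          rw [hmul]; exact hZeq
      _ =ᵐ[μ] (fun a => (X a)⁻¹) *
            μ[fun a => X a * Z a | MeasurableSpace.comap X inferInstance] := by
          refine condExp_mul_of_stronglyMeasurable_left hinvm ?_ hXZint
          rw [hmul]; exact hZint.congr hZeq
      _ =ᵐ[μ] fun a => (X a)⁻¹ * f (X a) := by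
          filter_upwards [hcond] with a ha
          simp only [Pi.mul_apply, ha, Function.comp_apply]
  set U : α → ℝ := fun a => f (X a) / (X a) with hU_def
  have hcondZ' : μ[Z | MeasurableSpace.comap X inferInstance] =ᵐ[μ] U := by
    refine hcondZ.trans (Filter.Eventually.of_forall fun a => ?_)
    show (X a)⁻¹ * f (X a) = f (X a) / X a
    rw [div_eq_inv_mul]
  have hUint : Integrable U μ := integrable_condExp.congr hcondZ'
  have hEU : ∫ a, U a ∂μ = ∫ a, Z a ∂μ := by
    rw [← integral_congr_ae hcondZ', integral_condExp hm]
  -- U·X = f ∘ X a.e.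
  have hUX : (fun a => U a * X a) =ᵐ[μ] f ∘ X := by
    filter_upwards [hXpos] with a ha
    simp only [hU_def, Function.comp_apply, div_mul_cancel₀ _ ha.ne']
  have hfXint : Integrable (f ∘ X) μ := integrable_condExp.congr hcond
  have hUXint : Integrable (fun a => U a * X a) μ := hfXint.congr hUX.symm
  have hEfX : ∫ a, (f ∘ X) a ∂μ = ∫ a, X a * Z a ∂μ := by
    rw [← integral_congr_ae hcond, integral_condExp hm]
  have hEUX : ∫ a, U a * X a ∂μ = ∫ a, X a * Z a ∂μ := by
    rw [integral_congr_ae hUX, hEfX]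
  -- monotonicity of x ↦ f x / x on positives
  have mono : ∀ x y : ℝ, 0 < x → 0 < y → x ≤ y → f x / x ≤ f y / y := by
    intro x y hx hy hxy
    have hb : x / y * y = x := div_mul_cancel₀ x hy.ne'
    have hb0 : 0 ≤ x / y := div_nonneg hx.le hy.le
    have hb1 : x / y ≤ 1 := (div_le_one hy).mpr hxy
    have hconv := hfconv.2 (Set.self_mem_Ici) (Set.mem_Ici.mpr hy.le)
      (by linarith : (0:ℝ) ≤ 1 - x / y) hb0 (by ring)
    simp only [smul_eq_mul, mul_zero, zero_add, hb] at hconv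
    have h0 : (1 - x / y) * f 0 ≤ 0 := mul_nonpos_of_nonneg_of_nonpos (by linarith) hf0
    have hfx : f x ≤ x / y * f y := by linarith
    have hc : x / y * f y * y = x * f y := by rw [mul_right_comm, hb]
    rw [div_le_div_iff₀ hx hy]
    have := mul_le_mul_of_nonneg_right hfx hy.le
    rw [hc] at this
    linarith
  -- a.e. positivity on the product
  have h0 : μ {a | 0 < X a}ᶜ = 0 := by
    rw [Set.compl_setOf]
    exact ae_iff.mp hXpos
  have hprodpos : ∀ᵐ z ∂(μ.prod μ), 0 < X z.1 ∧ 0 < X z.2 := by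
    rw [ae_iff]
    refine measure_mono_null
      (t := ({a | 0 < X a}ᶜ ×ˢ Set.univ) ∪ (Set.univ ×ˢ {a | 0 < X a}ᶜ))
      (fun z hz => ?_) (measure_union_null ?_ ?_)
    · simp only [Set.mem_setOf_eq, not_and_or] at hz
      rcases hz with h | h
      · exact Or.inl ⟨h, Set.mem_univ _⟩
      · exact Or.inr ⟨Set.mem_univ _, h⟩
    · rw [Measure.prod_prod, h0, zero_mul]
    · rw [Measure.prod_prod, h0, mul_zero]
  have hmono : ∀ᵐ z ∂(μ.prod μ), 0 ≤ (U z.1 - U z.2) * (X z.1 - X z.2) := by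
    filter_upwards [hprodpos] with z hz
    rcases le_total (X z.1) (X z.2) with h | h
    · have h' := mul_nonneg (sub_nonneg.mpr (mono _ _ hz.1 hz.2 h)) (sub_nonneg.mpr h)
      nlinarith [h']
    · exact mul_nonneg (sub_nonneg.mpr (mono _ _ hz.2 hz.1 h)) (sub_nonneg.mpr h)
  have hcorr := corr_aux μ U X hUint hXint hUXint hmono
  rw [hEU, hEUX] at hcorr
  exact (le_div_iff₀ hEX).mpr hcorr
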